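/- Let p, r be positive integers and let H ∈ ℝ^{(p+r)×(p+r)} be a symmetric matrix partitioned as H = [[H₁₁, H₁₂],[H₁₂ᵀ, H₂₂]] with H₁₁ ∈ ℝ^{p×p}, H₁₂ ∈ ℝ^{p×r}, H₂₂ ∈ ℝ^{r×r}, and assume H₂₂ ≺ 0. Then the set S_H := {Z ∈ ℝ^{r×p} : col(I_p, Z)ᵀ H col(I_p, Z) ⪰ 0} is nonempty if and only if H₁₁ − H₁₂H₂₂⁻¹H₁₂ᵀ ⪰ 0 (the Schur complement of H with respect to H₂₂ is positive semidefinite). -/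

import Mathlib

open Matrix

/-- Let `H = [[H₁₁, H₁₂],[H₁₂ᵀ, H₂₂]]` be symmetric with `H₂₂ ≺ 0`.  Then the set
`S_H := {Z ∈ ℝ^{r×p} : col(I, Z)ᵀ H col(I, Z) ⪰ 0}` is nonempty iff the Schur complement
`H₁₁ − H₁₂ H₂₂⁻¹ H₁₂ᵀ` is positive semidefinite. -/
theorem SH_nonempty_iff_schur_psd (p r : ℕ) (hp : 0 < p) (hr : 0 < r)
    (H11 : Matrix (Fin p) (Fin p) ℝ) (H12 : Matrix (Fin p) (Fin r) ℝ)
    (H22 : Matrix (Fin r) (Fin r) ℝ)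
    (hH11 : H11.IsSymm) (hH22sym : H22.IsSymm)
    (hH22 : (-H22).PosDef) :
    {Z : Matrix (Fin r) (Fin p) ℝ |
        ((fromRows (1 : Matrix (Fin p) (Fin p) ℝ) Z)ᵀ *
          (fromBlocks H11 H12 H12ᵀ H22) *
          fromRows (1 : Matrix (Fin p) (Fin p) ℝ) Z).PosSemidef}.Nonempty
      ↔ (H11 - H12 * H22⁻¹ * H12ᵀ).PosSemidef := by
  -- H22 is invertible
  have hdet : IsUnit H22.det := by
    have h1 : (-H22).det ≠ 0 := ne_of_gt hH22.det_pos
    have h2 : H22.det ≠ 0 := by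
      intro h
      apply h1
      rw [det_neg, h, mul_zero]
    exact isUnit_iff_ne_zero.mpr h2
  have hmulinv : H22 * H22⁻¹ = 1 := mul_nonsing_inv _ hdet
  have hinvmul : H22⁻¹ * H22 = 1 := nonsing_inv_mul _ hdet
  have hinvsym : H22⁻¹ᵀ = H22⁻¹ := by
    rw [transpose_nonsing_inv, hH22sym.eq]
  -- the key algebraic identity
  have key : ∀ Z : Matrix (Fin r) (Fin p) ℝ,
      ((fromRows (1 : Matrix (Fin p) (Fin p) ℝ) Z)ᵀ *
          (fromBlocks H11 H12 H12ᵀ H22) *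
          fromRows (1 : Matrix (Fin p) (Fin p) ℝ) Z)
        = (H11 - H12 * H22⁻¹ * H12ᵀ)
          + (Z + H22⁻¹ * H12ᵀ)ᵀ * H22 * (Z + H22⁻¹ * H12ᵀ) := by
    intro Z
    rw [transpose_fromRows, fromCols_mul_fromBlocks, fromCols_mul_fromRows]
    have hWT : (Z + H22⁻¹ * H12ᵀ)ᵀ = Zᵀ + H12 * H22⁻¹ := by
      rw [transpose_add, transpose_mul, hinvsym, transpose_transpose]
    rw [hWT]
    have expand : (Zᵀ + H12 * H22⁻¹) * H22 * (Z + H22⁻¹ * H12ᵀ)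
        = Zᵀ * H22 * Z + Zᵀ * H12ᵀ + H12 * Z + H12 * H22⁻¹ * H12ᵀ := by
      have h1 : (Zᵀ + H12 * H22⁻¹) * H22 = Zᵀ * H22 + H12 := by
        rw [Matrix.add_mul, Matrix.mul_assoc, hinvmul, Matrix.mul_one]
      rw [h1, Matrix.mul_add, Matrix.add_mul, Matrix.add_mul]
      have h2 : Zᵀ * H22 * (H22⁻¹ * H12ᵀ) = Zᵀ * H12ᵀ := by
        rw [Matrix.mul_assoc, ← Matrix.mul_assoc H22, hmulinv, Matrix.one_mul]
      rw [h2]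
      have h3 : H12 * (H22⁻¹ * H12ᵀ) = H12 * H22⁻¹ * H12ᵀ := by rw [Matrix.mul_assoc]
      rw [h3]
      abel
    rw [expand]
    simp only [transpose_one, one_mul, mul_one, Matrix.add_mul, Matrix.one_mul]
    abel
  constructor
  · rintro ⟨Z, hZ⟩
    have hneg : ((Z + H22⁻¹ * H12ᵀ)ᵀ * (-H22) * (Z + H22⁻¹ * H12ᵀ)).PosSemidef := by
      have := hH22.posSemidef.conjTranspose_mul_mul_same (Z + H22⁻¹ * H12ᵀ)
      simpa [conjTranspose_eq_transpose_of_trivial] using this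
    have : (H11 - H12 * H22⁻¹ * H12ᵀ)
        = ((fromRows (1 : Matrix (Fin p) (Fin p) ℝ) Z)ᵀ *
            (fromBlocks H11 H12 H12ᵀ H22) *
            fromRows (1 : Matrix (Fin p) (Fin p) ℝ) Z)
          + (Z + H22⁻¹ * H12ᵀ)ᵀ * (-H22) * (Z + H22⁻¹ * H12ᵀ) := by
      rw [key Z]
      simp only [Matrix.mul_neg, Matrix.neg_mul]
      abel
    rw [this]
    exact hZ.add hneg
  · intro hS
    refine ⟨-(H22⁻¹ * H12ᵀ), ?_⟩
    show ((fromRows (1 : Matrix (Fin p) (Fin p) ℝ) (-(H22⁻¹ * H12ᵀ)))ᵀ *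
          (fromBlocks H11 H12 H12ᵀ H22) *
          fromRows (1 : Matrix (Fin p) (Fin p) ℝ) (-(H22⁻¹ * H12ᵀ))).PosSemidef
    rw [key, neg_add_cancel]
    simpa using hS
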